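/- arXiv:2111.00623 — 2 statements merged into one kernel-verified Lean document; each statement's English description precedes it below -/
import Mathlib

section
/- Suppose S is a special symmetry group acting on X, and '<' is a relation that linearly orders the set of orbits X/∼ (trichotomy: for any two orbits A, B exactly one of A<B, B<A, A=B holds). Let m : X → ℝⁿ be a parity-even chiral measure with all components nonnegative (m = |m|). Define m_o(x) = m(x) if S(x) < S(P(x)) and m_o(x) = -m(x) otherwise. Then m_o is S-invariant. -/
open Classical in
theorem constructed_odd_measure_is_S_invariant
    {X : Type*} {S : Type*} [Group S] [MulAction S X] {n : ℕ}
    (P : X → X) (hP : ∀ x, P (P x) = x)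
    (hSpecial : ∀ s : S, ∃ s' : S, ∀ x, P (s • x) = s' • P x)
    (lt : Set X → Set X → Prop)
    (hTrich : ∀ x y : X,
      (lt (MulAction.orbit S x) (MulAction.orbit S y) ∧
        ¬ lt (MulAction.orbit S y) (MulAction.orbit S x) ∧
        MulAction.orbit S x ≠ MulAction.orbit S y) ∨
      (lt (MulAction.orbit S y) (MulAction.orbit S x) ∧
        ¬ lt (MulAction.orbit S x) (MulAction.orbit S y) ∧
        MulAction.orbit S x ≠ MulAction.orbit S y) ∨
      (MulAction.orbit S x = MulAction.orbit S y ∧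
        ¬ lt (MulAction.orbit S x) (MulAction.orbit S y) ∧
        ¬ lt (MulAction.orbit S y) (MulAction.orbit S x)))
    (m : X → Fin n → ℝ)
    (hEven : ∀ x, m (P x) = m x)
    (hInv : ∀ (s : S) (x : X), m (s • x) = m x)
    (hAchiral : ∀ x, P x ∈ MulAction.orbit S x → m x = 0)
    (hNonneg : ∀ x i, 0 ≤ m x i)
    (mo : X → Fin n → ℝ)
    (hmo : ∀ x, mo x =
      if lt (MulAction.orbit S x) (MulAction.orbit S (P x)) then m x else -m x) :
    ∀ (s : S) (x : X), mo (s • x) = mo x := by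
  intro s x
  obtain ⟨s', hs'⟩ := hSpecial s
  rw [hmo, hmo]
  have h1 : MulAction.orbit S (s • x) = MulAction.orbit S x := MulAction.orbit_smul s x
  have h2 : MulAction.orbit S (P (s • x)) = MulAction.orbit S (P x) := by
    rw [hs' x]; exact MulAction.orbit_smul s' (P x)
  rw [h1, h2, hInv s x]
end

section
/- The polynomial I(a₁,a₂,b₁,b₂) = -2 a₁ a₂ b₁ + a₁² b₂ - b₁² b₂ is invariant under the simultaneous rotation action (a₁,b₁) ↦ (a₁ cos δ - b₁ sin δ, a₁ sin δ + b₁ cos δ) and (a₂,b₂) ↦ (a₂ cos 2δ - b₂ sin 2δ, a₂ sin 2δ + b₂ cos 2δ), for all δ ∈ ℝ, and it is odd under the parity map (a₁,b₁,a₂,b₂) ↦ (a₁,-b₁,a₂,-b₂). -/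
theorem I121_rotation_invariant_and_parity_odd :
    (∀ δ a₁ b₁ a₂ b₂ : ℝ,
      (-2 * (a₁ * Real.cos δ - b₁ * Real.sin δ) * (a₂ * Real.cos (2*δ) - b₂ * Real.sin (2*δ))
          * (a₁ * Real.sin δ + b₁ * Real.cos δ)
        + (a₁ * Real.cos δ - b₁ * Real.sin δ)^2 * (a₂ * Real.sin (2*δ) + b₂ * Real.cos (2*δ))
        - (a₁ * Real.sin δ + b₁ * Real.cos δ)^2 * (a₂ * Real.sin (2*δ) + b₂ * Real.cos (2*δ)))
        = -2 * a₁ * a₂ * b₁ + a₁^2 * b₂ - b₁^2 * b₂) ∧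
    (∀ a₁ b₁ a₂ b₂ : ℝ,
      (-2 * a₁ * a₂ * (-b₁) + a₁^2 * (-b₂) - (-b₁)^2 * (-b₂))
        = -(-2 * a₁ * a₂ * b₁ + a₁^2 * b₂ - b₁^2 * b₂)) := by
  constructor
  · intro δ a₁ b₁ a₂ b₂
    have hc := Real.cos_two_mul δ
    have hs := Real.sin_two_mul δ
    have hp := Real.sin_sq_add_cos_sq δ
    rw [hc, hs]
    linear_combination (-b₁^2*b₂ - 2*a₁*b₁*a₂ + a₁^2*b₂ - 2*Real.cos δ^2*b₁^2*b₂
      - 4*Real.cos δ^2*a₁*b₁*a₂ + 2*Real.cos δ^2*a₁^2*b₂ + 2*Real.sin δ*Real.cos δ*b₁^2*a₂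
      - 4*Real.sin δ*Real.cos δ*a₁*b₁*b₂ - 2*Real.sin δ*Real.cos δ*a₁^2*a₂) * hp
  · intro a₁ b₁ a₂ b₂; ring
end
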